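/- arXiv:1811.08647 — 2 statements merged into one kernel-verified Lean document; each statement's English description precedes it below -/
import Mathlib

section
/- Let C be a standard Cauchy variable and ε an independent Rademacher variable. For every a ∈ [-1, 1] and y ∈ ℝ, sinh(arcsinh(aC) + yε) has the same distribution as aC cosh y + √(1 − a²) sinh(yε). -/
open MeasureTheory Real Set ProbabilityTheory
open scoped ENNReal

lemma arctan_two_add {u₁ u₂ v₁ v₂ k : ℝ} (hk : 0 < k)
    (hsum : v₁ + v₂ = k * (u₁ + u₂)) (hprod : 1 - v₁ * v₂ = k * (1 - u₁ * u₂)) :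
    arctan u₁ + arctan u₂ = arctan v₁ + arctan v₂ := by
  have hfrac : 1 - u₁ * u₂ ≠ 0 → (u₁ + u₂) / (1 - u₁ * u₂) = (v₁ + v₂) / (1 - v₁ * v₂) := by
    intro h
    rw [div_eq_div_iff h (by rw [hprod]; exact mul_ne_zero hk.ne' h)]
    linear_combination (u₁ + u₂) * hprod - (1 - u₁ * u₂) * hsum
  rcases lt_trichotomy (u₁ * u₂) 1 with h | h | h
  · have h' : v₁ * v₂ < 1 := by nlinarith
    rw [arctan_add h, arctan_add h', hfrac (by linarith)]
  · have hv : v₁ * v₂ = 1 := by nlinarith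
    have hu0 : u₁ ≠ 0 := by rintro rfl; simp at h
    have hv0 : v₁ ≠ 0 := by rintro rfl; simp at hv
    have hu₂ : u₂ = u₁⁻¹ := by field_simp; linarith
    have hv₂ : v₂ = v₁⁻¹ := by field_simp; linarith
    rcases hu0.lt_or_gt with hu1 | hu1
    · have husum : u₁ + u₂ < 0 := by
        rw [hu₂]; have : 0 < -u₁ + (-u₁)⁻¹ := by
          have h1 : 0 < -u₁ := by linarith
          positivity
        rw [inv_neg] at this; linarith
      have hv1 : v₁ < 0 := by
        rcases hv0.lt_or_gt with h'|h'; · exact h'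
        exfalso
        have : 0 < v₁ + v₂ := by rw [hv₂]; positivity
        nlinarith
      rw [hu₂, hv₂, arctan_inv_of_neg hu1, arctan_inv_of_neg hv1]
      ring
    · have hv1 : 0 < v₁ := by
        rcases hv0.lt_or_gt with h'|h'; swap; · exact h'
        exfalso
        have husum : 0 < u₁ + u₂ := by rw [hu₂]; positivity
        have : v₁ + v₂ < 0 := by
          rw [hv₂]; have h1 : 0 < -v₁ := by linarith
          have : 0 < -v₁ + (-v₁)⁻¹ := by positivity
          rw [inv_neg] at this; linarith
        nlinarith
      rw [hu₂, hv₂, arctan_inv_of_pos hu1, arctan_inv_of_pos hv1]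
      ring
  · have hv : 1 < v₁ * v₂ := by nlinarith
    have husum : u₁ + u₂ ≠ 0 := by
      intro h0
      have : u₂ = -u₁ := by linarith
      rw [this] at h; nlinarith [sq_nonneg u₁]
    rcases husum.lt_or_gt with hneg | hpos
    · have hvsum : v₁ + v₂ < 0 := by rw [hsum]; exact mul_neg_of_pos_of_neg hk hneg
      have hu1 : u₁ < 0 := by
        by_contra hc; push_neg at hc
        have h2 : u₂ ≤ 0 := by linarith
        nlinarith [mul_nonpos_of_nonneg_of_nonpos hc h2]
      have hv1 : v₁ < 0 := by
        by_contra hc; push_neg at hc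
        have h2 : v₂ ≤ 0 := by linarith
        nlinarith [mul_nonpos_of_nonneg_of_nonpos hc h2]
      rw [arctan_add_eq_sub_pi h hu1, arctan_add_eq_sub_pi hv hv1, hfrac (by linarith)]
    · have hvsum : 0 < v₁ + v₂ := by rw [hsum]; exact mul_pos hk hpos
      have hu1 : 0 < u₁ := by
        by_contra hc; push_neg at hc
        have h2 : 0 ≤ u₂ := by linarith
        nlinarith [mul_nonpos_of_nonpos_of_nonneg hc h2]
      have hv1 : 0 < v₁ := by
        by_contra hc; push_neg at hc
        have h2 : 0 ≤ v₂ := by linarith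
        nlinarith [mul_nonpos_of_nonpos_of_nonneg hc h2]
      rw [arctan_add_eq_add_pi h hu1, arctan_add_eq_add_pi hv hv1, hfrac (by linarith)]

noncomputable def cmeasure : Measure ℝ :=
  volume.withDensity fun x => ENNReal.ofReal (1 / (π * (1 + x ^ 2)))

lemma cauchy_Iic (b : ℝ) : cmeasure (Iic b) = ENNReal.ofReal ((arctan b + π/2)/π) := by
  rw [cmeasure, withDensity_apply _ measurableSet_Iic]
  simp only [one_div, mul_inv]
  rw [← ofReal_integral_eq_lintegral_ofReal
      ((integrable_inv_one_add_sq.const_mul π⁻¹).restrict)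
      (Filter.Eventually.of_forall fun x => by positivity)]
  rw [integral_const_mul _ _, integral_Iic_inv_one_add_sq, inv_mul_eq_div]

instance : IsProbabilityMeasure cmeasure := by
  constructor
  rw [cmeasure, withDensity_apply _ MeasurableSet.univ, Measure.restrict_univ]
  simp only [one_div, mul_inv]
  rw [← ofReal_integral_eq_lintegral_ofReal
      (integrable_inv_one_add_sq.const_mul π⁻¹)
      (Filter.Eventually.of_forall fun x => by positivity)]
  rw [integral_const_mul _ _, integral_univ_inv_one_add_sq, inv_mul_cancel₀ pi_ne_zero]
  simp

lemma meas_f (a b : ℝ) : Measurable fun x : ℝ => sinh (arsinh (a*x) + b) :=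
  ((Real.continuous_arsinh.measurable.comp (measurable_id.const_mul a)).add_const b).sinh

lemma meas_g (a c m : ℝ) : Measurable fun x : ℝ => a*x*c + m :=
  ((measurable_id.const_mul a).mul_const c).add_const m

lemma preim_f (a b t : ℝ) (ha : 0 < a) :
    (fun x : ℝ => sinh (arsinh (a*x) + b)) ⁻¹' (Iic t) = Iic (sinh (arsinh t - b) / a) := by
  ext x
  simp only [mem_preimage, mem_Iic]
  rw [← Real.arsinh_le_arsinh, Real.arsinh_sinh, le_div_iff₀ ha,
    ← Real.arsinh_le_arsinh (x := x * a), Real.arsinh_sinh, mul_comm x a]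
  constructor <;> intro <;> linarith

lemma preim_g (a c m t : ℝ) (hac : 0 < a * c) :
    (fun x : ℝ => a*x*c + m) ⁻¹' (Iic t) = Iic ((t - m) / (a*c)) := by
  ext x
  simp only [mem_preimage, mem_Iic]
  rw [le_div_iff₀ hac]
  constructor <;> intro h <;> nlinarith

lemma prod_smul_right {α β : Type*} [MeasurableSpace α] [MeasurableSpace β]
    (μ : Measure α) [SigmaFinite μ] (ν : Measure β) [SigmaFinite ν] (c : ℝ≥0∞)
    [SigmaFinite (c • ν)] : μ.prod (c • ν) = c • μ.prod ν :=
  Measure.prod_eq fun s t _ _ => by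
    simp [Measure.prod_prod, mul_left_comm, mul_comm, mul_assoc]

lemma arctan_key (a y t : ℝ) (ha : 0 < a) (ha1 : a ≤ 1) :
    arctan (sinh (arsinh t - y) / a) + arctan (sinh (arsinh t - -y) / a)
      = arctan ((t - Real.sqrt (1 - a^2) * sinh y) / (a * cosh y))
        + arctan ((t - -(Real.sqrt (1 - a^2) * sinh y)) / (a * cosh y)) := by
  have hcy : 0 < cosh y := cosh_pos y
  have hc : 0 < cosh (arsinh t) := cosh_pos _
  have hcy2 : cosh y ^ 2 = 1 + sinh y ^ 2 := Real.cosh_sq' y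
  have hr2 : Real.sqrt (1 - a^2) ^ 2 = 1 - a^2 := Real.sq_sqrt (by nlinarith)
  have hs1 : sinh (arsinh t - y) = t * cosh y - cosh (arsinh t) * sinh y := by
    rw [Real.sinh_sub, Real.sinh_arsinh]
  have hs2 : sinh (arsinh t - -y) = t * cosh y + cosh (arsinh t) * sinh y := by
    rw [sub_neg_eq_add, Real.sinh_add, Real.sinh_arsinh]
  apply arctan_two_add (k := (cosh y ^ 2)⁻¹) (by positivity)
  · rw [hs1, hs2]
    field_simp
    ring
  · have hst2 : Real.sqrt (1 + t ^ 2) ^ 2 = 1 + t ^ 2 := Real.sq_sqrt (by positivity)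
    have hct : cosh (arsinh t) ^ 2 = 1 + t ^ 2 := by rw [Real.cosh_arsinh]; exact hst2
    rw [hs1, hs2]
    field_simp
    linear_combination (sinh y^2) * hr2
      - (sinh y^2) * hct
      + (a^2 + t^2) * hcy2

lemma key_pos (a y : ℝ) (ha : 0 < a) (ha1 : a ≤ 1) :
    cmeasure.map (fun x => sinh (arsinh (a*x) + y))
        + cmeasure.map (fun x => sinh (arsinh (a*x) + -y))
      = cmeasure.map (fun x => a*x*cosh y + Real.sqrt (1-a^2) * sinh y)
        + cmeasure.map (fun x => a*x*cosh y + -(Real.sqrt (1-a^2) * sinh y)) := by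
  have hcy : 0 < cosh y := cosh_pos y
  have hac : 0 < a * cosh y := mul_pos ha hcy
  haveI h1 : IsProbabilityMeasure (cmeasure.map (fun x => sinh (arsinh (a*x) + y))) :=
    Measure.isProbabilityMeasure_map (meas_f a y).aemeasurable
  haveI h2 : IsProbabilityMeasure (cmeasure.map (fun x => sinh (arsinh (a*x) + -y))) :=
    Measure.isProbabilityMeasure_map (meas_f a (-y)).aemeasurable
  apply Measure.ext_of_Iic
  intro t
  have hq : ∀ w : ℝ, 0 ≤ (arctan w + π/2)/π := fun w =>
    div_nonneg (by linarith [neg_pi_div_two_lt_arctan w]) pi_pos.le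
  rw [Measure.add_apply, Measure.add_apply,
    Measure.map_apply (meas_f a y) measurableSet_Iic,
    Measure.map_apply (meas_f a (-y)) measurableSet_Iic,
    Measure.map_apply (meas_g a (cosh y) _) measurableSet_Iic,
    Measure.map_apply (meas_g a (cosh y) _) measurableSet_Iic,
    preim_f a y t ha, preim_f a (-y) t ha, preim_g a (cosh y) _ t hac,
    preim_g a (cosh y) _ t hac,
    cauchy_Iic, cauchy_Iic, cauchy_Iic, cauchy_Iic,
    ← ENNReal.ofReal_add (hq _) (hq _), ← ENNReal.ofReal_add (hq _) (hq _)]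
  congr 1
  rw [← add_div, ← add_div]
  have := arctan_key a y t ha ha1
  congr 1
  linarith [this]

lemma key (a y : ℝ) (ha : a ∈ Icc (-1:ℝ) 1) :
    cmeasure.map (fun x => sinh (arsinh (a*x) + y))
        + cmeasure.map (fun x => sinh (arsinh (a*x) + -y))
      = cmeasure.map (fun x => a*x*cosh y + Real.sqrt (1-a^2) * sinh y)
        + cmeasure.map (fun x => a*x*cosh y + -(Real.sqrt (1-a^2) * sinh y)) := by
  obtain ⟨hal, har⟩ := ha
  rcases lt_trichotomy a 0 with hneg | rfl | hpos
  · -- a < 0 : reduce to -a via negation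
    set b := -a with hb
    have hb0 : 0 < b := by simp [hb]; linarith
    have hb1 : b ≤ 1 := by simp [hb]; linarith
    have hsq : (1 : ℝ) - a^2 = 1 - b^2 := by rw [hb]; ring
    have e1 : (fun x : ℝ => sinh (arsinh (a*x) + y)) = fun x => -sinh (arsinh (b*x) + -y) := by
      funext x
      rw [show a*x = -(b*x) by rw [hb]; ring, Real.arsinh_neg, ← Real.sinh_neg]
      congr 1; ring
    have e2 : (fun x : ℝ => sinh (arsinh (a*x) + -y)) = fun x => -sinh (arsinh (b*x) + y) := by
      funext x
      rw [show a*x = -(b*x) by rw [hb]; ring, Real.arsinh_neg, ← Real.sinh_neg]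
      congr 1; ring
    have e3 : (fun x : ℝ => a*x*cosh y + Real.sqrt (1-a^2) * sinh y)
        = fun x => -(b*x*cosh y + -(Real.sqrt (1-b^2) * sinh y)) := by
      funext x; rw [hsq, hb]; ring
    have e4 : (fun x : ℝ => a*x*cosh y + -(Real.sqrt (1-a^2) * sinh y))
        = fun x => -(b*x*cosh y + Real.sqrt (1-b^2) * sinh y) := by
      funext x; rw [hsq, hb]; ring
    have mneg : ∀ (F : ℝ → ℝ), Measurable F →
        cmeasure.map (fun x => -F x) = (cmeasure.map F).map (fun z : ℝ => -z) := by
      intro F hF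
      rw [Measure.map_map measurable_neg hF]
      rfl
    rw [e1, e2, e3, e4, mneg _ (meas_f b (-y)), mneg _ (meas_f b y),
      mneg _ (meas_g b (cosh y) (-(Real.sqrt (1-b^2) * sinh y))), mneg _ (meas_g b (cosh y) (Real.sqrt (1-b^2) * sinh y)),
      ← Measure.map_add _ _ measurable_neg, ← Measure.map_add _ _ measurable_neg,
      add_comm (cmeasure.map fun x => sinh (arsinh (b*x) + -y)),
      key_pos b y hb0 hb1, add_comm]
  · -- a = 0
    have e1 : (fun x : ℝ => sinh (arsinh (0*x) + y)) = fun x : ℝ => 0*x*cosh y + Real.sqrt (1-0^2) * sinh y := by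
      funext x; simp
    have e2 : (fun x : ℝ => sinh (arsinh (0*x) + -y)) = fun x : ℝ => 0*x*cosh y + -(Real.sqrt (1-0^2) * sinh y) := by
      funext x; simp
    rw [e1, e2]
  · exact key_pos a y hpos har

theorem stmt_13 {Ω : Type*} [MeasurableSpace Ω] (P : Measure Ω) [IsProbabilityMeasure P]
    (C ε : Ω → ℝ) (hC : Measurable C) (hε : Measurable ε)
    (hCauchy : P.map C = volume.withDensity (fun x => ENNReal.ofReal (1 / (π * (1 + x ^ 2)))))
    (hRad : P.map ε = ((1:ℝ≥0∞)/2) • Measure.dirac (1:ℝ) + ((1:ℝ≥0∞)/2) • Measure.dirac (-1:ℝ))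
    (hindep : IndepFun C ε P)
    (a y : ℝ) (ha : a ∈ Icc (-1:ℝ) 1) :
    P.map (fun ω => Real.sinh (Real.arsinh (a * C ω) + y * ε ω))
      = P.map (fun ω => a * C ω * Real.cosh y + Real.sqrt (1 - a ^ 2) * Real.sinh (y * ε ω)) := by
  have hpair : P.map (fun ω => (C ω, ε ω)) = (P.map C).prod (P.map ε) :=
    (indepFun_iff_map_prod_eq_prod_map_map hC.aemeasurable hε.aemeasurable).mp hindep
  have mF : Measurable (fun p : ℝ×ℝ => sinh (arsinh (a*p.1) + y*p.2)) :=
    (((Real.continuous_arsinh.measurable.comp (measurable_fst.const_mul a))).add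
      (measurable_snd.const_mul y)).sinh
  have mG : Measurable (fun p : ℝ×ℝ => a*p.1*cosh y + Real.sqrt (1-a^2) * sinh (y*p.2)) :=
    ((measurable_fst.const_mul a).mul_const _).add
      (((measurable_snd.const_mul y)).sinh.const_mul _)
  have eF : P.map (fun ω => Real.sinh (Real.arsinh (a * C ω) + y * ε ω))
      = (P.map (fun ω => (C ω, ε ω))).map (fun p : ℝ×ℝ => sinh (arsinh (a*p.1) + y*p.2)) := by
    rw [Measure.map_map mF (hC.prodMk hε)]
    rfl
  have eG : P.map (fun ω => a * C ω * Real.cosh y + Real.sqrt (1 - a ^ 2) * Real.sinh (y * ε ω))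
      = (P.map (fun ω => (C ω, ε ω))).map
          (fun p : ℝ×ℝ => a*p.1*cosh y + Real.sqrt (1-a^2) * sinh (y*p.2)) := by
    rw [Measure.map_map mG (hC.prodMk hε)]
    rfl
  have hcm : volume.withDensity (fun x => ENNReal.ofReal (1 / (π * (1 + x ^ 2)))) = cmeasure := rfl
  rw [eF, eG, hpair, hCauchy, hRad, hcm]
  haveI i1 : IsFiniteMeasure (((1:ℝ≥0∞)/2) • Measure.dirac (1:ℝ)) := by
    constructor
    rw [Measure.smul_apply, smul_eq_mul]
    simp
  haveI i2 : IsFiniteMeasure (((1:ℝ≥0∞)/2) • Measure.dirac (-1:ℝ)) := by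
    constructor
    rw [Measure.smul_apply, smul_eq_mul]
    simp
  have comp1 : ∀ (F : ℝ×ℝ → ℝ), Measurable F → ∀ s : ℝ,
      (cmeasure.map (fun x => (x, s))).map F = cmeasure.map (fun x => F (x, s)) := by
    intro F hF s
    rw [Measure.map_map hF measurable_prodMk_right]
    rfl
  rw [Measure.prod_add, prod_smul_right, prod_smul_right,
    Measure.prod_dirac, Measure.prod_dirac,
    Measure.map_add _ _ mF, Measure.map_add _ _ mG,
    Measure.map_smul, Measure.map_smul, Measure.map_smul, Measure.map_smul,
    comp1 _ mF, comp1 _ mF, comp1 _ mG, comp1 _ mG,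
    ← smul_add, ← smul_add]
  congr 1
  have hsimp1 : (fun x : ℝ => sinh (arsinh (a*x) + y*(1:ℝ))) = fun x => sinh (arsinh (a*x) + y) := by
    funext x; rw [mul_one]
  have hsimp2 : (fun x : ℝ => sinh (arsinh (a*x) + y*(-1:ℝ))) = fun x => sinh (arsinh (a*x) + -y) := by
    funext x; rw [mul_neg_one]
  have hsimp3 : (fun x : ℝ => a*x*cosh y + Real.sqrt (1-a^2) * sinh (y*(1:ℝ)))
      = fun x => a*x*cosh y + Real.sqrt (1-a^2) * sinh y := by
    funext x; rw [mul_one]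
  have hsimp4 : (fun x : ℝ => a*x*cosh y + Real.sqrt (1-a^2) * sinh (y*(-1:ℝ)))
      = fun x => a*x*cosh y + -(Real.sqrt (1-a^2) * sinh y) := by
    funext x; rw [mul_neg_one, Real.sinh_neg, mul_neg]
  rw [hsimp1, hsimp2, hsimp3, hsimp4]
  exact key a y ha
end

section
/- For μ > 0, let I_μ be a random variable with the GIG(0; √μ, √μ) distribution, i.e., density (2K_0(μ))^{-1} v^{-1} exp(−(μ/v + μv)/2) on (0, ∞). Then I_μ converges in distribution to the constant 1 as μ → ∞: for every bounded continuous f : (0,∞) → ℝ, E[f(I_μ)] → f(1). -/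
open MeasureTheory Real Set Filter

/-- The Macdonald function of order zero, via its integral representation. -/
noncomputable def K0 (a : ℝ) : ℝ := (1 / 2) * ∫ x : ℝ, Real.exp (-a * Real.cosh x)

lemma sq_div_eight_le_cosh (x : ℝ) : x ^ 2 / 8 ≤ Real.cosh x := by
  have h1 : 1 + |x| / 2 ≤ Real.exp (|x| / 2) := by
    linarith [Real.add_one_le_exp (|x| / 2)]
  have h2 : Real.exp (|x| / 2) * Real.exp (|x| / 2) = Real.exp |x| := by
    rw [← Real.exp_add]; ring_nf
  have h3 : Real.exp |x| / 2 ≤ Real.cosh x := by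
    rw [← Real.cosh_abs, Real.cosh_eq]
    have := Real.exp_pos (-|x|)
    linarith
  have h0 : 0 ≤ |x| := abs_nonneg x
  have h4 : |x| ^ 2 = x ^ 2 := sq_abs x
  nlinarith [Real.exp_pos (|x| / 2)]

lemma integrable_w {μ : ℝ} (hμ : 0 < μ) :
    Integrable (fun x : ℝ => Real.exp (-μ * Real.cosh x)) := by
  refine (integrable_exp_neg_mul_sq (by positivity : (0:ℝ) < μ / 8)).mono' ?_ ?_
  · exact (Real.continuous_exp.comp ((continuous_const.mul Real.continuous_cosh))).aestronglyMeasurable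
  · filter_upwards with x
    rw [Real.norm_eq_abs, abs_of_pos (Real.exp_pos _)]
    apply Real.exp_le_exp.2
    have := sq_div_eight_le_cosh x
    nlinarith

lemma cov (g : ℝ → ℝ) :
    (∫ v in Ioi (0:ℝ), g v) = ∫ x : ℝ, Real.exp x * g (Real.exp x) := by
  have h := integral_image_eq_integral_abs_deriv_smul (MeasurableSet.univ)
    (fun x (_ : x ∈ Set.univ) => (Real.hasDerivAt_exp x).hasDerivWithinAt)
    (Real.exp_injective.injOn) g
  rw [Set.image_univ, Real.range_exp] at h
  rw [h, MeasureTheory.Measure.restrict_univ]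
  congr 1
  ext x
  rw [Real.abs_exp, smul_eq_mul]

theorem stmt_15 (f : ℝ → ℝ) (hf : ContinuousOn f (Ioi (0:ℝ)))
    (hbdd : ∃ M, ∀ x, |f x| ≤ M) :
    Tendsto (fun μ : ℝ =>
        ∫ v in Ioi (0:ℝ), ((2 * K0 μ)⁻¹ * v⁻¹ * Real.exp (-(μ / v + μ * v) / 2)) * f v)
      atTop (nhds (f 1)) := by
  obtain ⟨M, hM⟩ := hbdd
  have hM0 : 0 ≤ M := le_trans (abs_nonneg _) (hM 0)
  set F : ℝ → ℝ := fun x => f (Real.exp x) with hFdef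
  have hFc : Continuous F := by
    rw [← continuousOn_univ]
    exact hf.comp Real.continuous_exp.continuousOn
      (fun x _ => Set.mem_Ioi.2 (Real.exp_pos x))
  have hFb : ∀ x, |F x| ≤ M := fun x => hM _
  set w : ℝ → ℝ → ℝ := fun μ x => Real.exp (-μ * Real.cosh x) with hwdef
  set I : ℝ → ℝ := fun μ => ∫ x : ℝ, w μ x with hIdef
  set J : ℝ → ℝ := fun μ => ∫ x : ℝ, w μ x * F x with hJdef
  have hwint : ∀ μ : ℝ, 0 < μ → Integrable (w μ) := fun μ h => integrable_w h
  have hwpos : ∀ (μ : ℝ) x, 0 < w μ x := fun μ x => Real.exp_pos _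
  have hIpos : ∀ μ : ℝ, 0 < μ → 0 < I μ := by
    intro μ hμ
    rw [hIdef]
    rw [MeasureTheory.integral_pos_iff_support_of_nonneg
      (fun x => (hwpos μ x).le) (hwint μ hμ)]
    have : Function.support (w μ) = Set.univ := by
      ext x; simp [Function.mem_support, (hwpos μ x).ne']
    rw [this]
    simp
  have hJint : ∀ μ : ℝ, 0 < μ → Integrable (fun x => w μ x * F x) := by
    intro μ hμ
    have := (hwint μ hμ).bdd_mul hFc.aestronglyMeasurable
      (c := M) (Filter.Eventually.of_forall fun x => by rw [Real.norm_eq_abs]; exact hFb x)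
    simpa [mul_comm] using this
  have h2K : ∀ μ : ℝ, 2 * K0 μ = I μ := by
    intro μ; rw [K0, hIdef]; ring
  have key : ∀ μ : ℝ,
      (∫ v in Ioi (0:ℝ), ((2 * K0 μ)⁻¹ * v⁻¹ * Real.exp (-(μ / v + μ * v) / 2)) * f v)
        = (I μ)⁻¹ * J μ := by
    intro μ
    rw [cov]
    have heq : ∀ x : ℝ,
        Real.exp x * (((2 * K0 μ)⁻¹ * (Real.exp x)⁻¹
            * Real.exp (-(μ / Real.exp x + μ * Real.exp x) / 2)) * f (Real.exp x))
          = (I μ)⁻¹ * (w μ x * F x) := by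
      intro x
      have hx : Real.exp x ≠ 0 := (Real.exp_pos x).ne'
      have hexp : -(μ / Real.exp x + μ * Real.exp x) / 2 = -μ * Real.cosh x := by
        rw [Real.cosh_eq, Real.exp_neg]
        field_simp
        ring
      rw [hexp, h2K]
      show Real.exp x * ((I μ)⁻¹ * (Real.exp x)⁻¹ * Real.exp (-μ * Real.cosh x) * f (Real.exp x))
        = (I μ)⁻¹ * (Real.exp (-μ * Real.cosh x) * f (Real.exp x))
      rw [show Real.exp x * ((I μ)⁻¹ * (Real.exp x)⁻¹ * Real.exp (-μ * Real.cosh x) * f (Real.exp x))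
        = (Real.exp x * (Real.exp x)⁻¹) * ((I μ)⁻¹ * (Real.exp (-μ * Real.cosh x) * f (Real.exp x))) by ring,
        mul_inv_cancel₀ hx, one_mul]
    simp_rw [heq]
    rw [MeasureTheory.integral_const_mul]
  rw [show (fun μ : ℝ =>
      ∫ v in Ioi (0:ℝ), ((2 * K0 μ)⁻¹ * v⁻¹ * Real.exp (-(μ / v + μ * v) / 2)) * f v)
      = fun μ => (I μ)⁻¹ * J μ from funext key]
  rw [Metric.tendsto_nhds]
  intro ε hε
  -- continuity of F at 0
  obtain ⟨δ, hδpos, hδ⟩ : ∃ δ > 0, ∀ x : ℝ, |x| ≤ δ → |F x - f 1| ≤ ε / 4 := by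
    obtain ⟨d, hd, h⟩ := Metric.continuousAt_iff.1 hFc.continuousAt (ε / 4) (by positivity)
    refine ⟨d / 2, by positivity, fun x hx => ?_⟩
    have h0 : F 0 = f 1 := by simp [hFdef]
    have := h (show dist x 0 < d by
      rw [Real.dist_eq, sub_zero]; linarith)
    rw [Real.dist_eq, h0] at this
    linarith
  set c0 : ℝ := Real.cosh (δ / 2) with hc0
  set c1 : ℝ := Real.cosh δ with hc1
  have hcc : c0 < c1 := by
    rw [hc0, hc1]
    apply Real.cosh_lt_cosh.2
    rw [abs_of_pos (by linarith), abs_of_pos hδpos]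
    linarith
  have hc0pos : 0 < c0 := lt_of_lt_of_le one_pos (Real.one_le_cosh _)
  set s : Set ℝ := {x : ℝ | δ ≤ |x|} with hsdef
  have hs : MeasurableSet s := measurableSet_le measurable_const measurable_abs
  set T : ℝ → ℝ := fun μ => ∫ x in s, w μ x with hTdef
  -- upper bound on tail
  have hT : ∀ μ : ℝ, 1 ≤ μ → T μ ≤ Real.exp (-(μ - 1) * c1) * I 1 := by
    intro μ hμ1
    have hμpos : (0:ℝ) < μ := lt_of_lt_of_le one_pos hμ1
    have hpt : ∀ x ∈ s, w μ x ≤ Real.exp (-(μ - 1) * c1) * w 1 x := by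
      intro x hx
      have hcx : c1 ≤ Real.cosh x := by
        rw [hc1, ← Real.cosh_abs x]
        exact Real.cosh_le_cosh.2 (by rw [abs_of_pos hδpos, abs_abs]; exact hx)
      rw [hwdef]
      simp only
      rw [← Real.exp_add]
      apply Real.exp_le_exp.2
      nlinarith
    calc T μ ≤ ∫ x in s, Real.exp (-(μ - 1) * c1) * w 1 x := by
          apply MeasureTheory.setIntegral_mono_on
            ((hwint μ hμpos).integrableOn)
            (((hwint 1 one_pos).const_mul _).integrableOn) hs hpt
      _ = Real.exp (-(μ - 1) * c1) * ∫ x in s, w 1 x :=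
          MeasureTheory.integral_const_mul _ _
      _ ≤ Real.exp (-(μ - 1) * c1) * I 1 := by
          apply mul_le_mul_of_nonneg_left _ (Real.exp_pos _).le
          exact MeasureTheory.setIntegral_le_integral (hwint 1 one_pos)
            (Filter.Eventually.of_forall fun x => (hwpos 1 x).le)
  -- lower bound on normalization
  have hIlow : ∀ μ : ℝ, 1 ≤ μ → (δ / 2) * Real.exp (-μ * c0) ≤ I μ := by
    intro μ hμ1
    have hμpos : (0:ℝ) < μ := lt_of_lt_of_le one_pos hμ1
    have h1 : (δ / 2) * Real.exp (-μ * c0) = ∫ _x in Ioc (0:ℝ) (δ / 2), Real.exp (-μ * c0) := by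
      rw [MeasureTheory.setIntegral_const, smul_eq_mul, Real.volume_real_Ioc]
      rw [max_eq_left (by linarith)]
      ring_nf
    rw [h1]
    calc (∫ _x in Ioc (0:ℝ) (δ / 2), Real.exp (-μ * c0))
        ≤ ∫ x in Ioc (0:ℝ) (δ / 2), w μ x := by
          apply MeasureTheory.setIntegral_mono_on
            (integrableOn_const (by rw [Real.volume_Ioc]; exact ENNReal.ofReal_ne_top))
            ((hwint μ hμpos).integrableOn) measurableSet_Ioc
          intro x hx
          rw [hwdef]
          apply Real.exp_le_exp.2
          have hcx : Real.cosh x ≤ c0 := by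
            rw [hc0, ← Real.cosh_abs x]
            apply Real.cosh_le_cosh.2
            rw [abs_of_pos (by linarith : (0:ℝ) < δ / 2), abs_abs,
              abs_of_pos hx.1]
            exact hx.2
          nlinarith
      _ ≤ I μ := MeasureTheory.setIntegral_le_integral (hwint μ hμpos)
            (Filter.Eventually.of_forall fun x => (hwpos μ x).le)
  -- main estimate
  have hmain : ∀ μ : ℝ, 1 ≤ μ → |(I μ)⁻¹ * J μ - f 1|
      ≤ ε / 4 + (2 * M) * ((Real.exp (-(μ - 1) * c1) * I 1) / ((δ / 2) * Real.exp (-μ * c0))) := by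
    intro μ hμ1
    have hμpos : (0:ℝ) < μ := lt_of_lt_of_le one_pos hμ1
    have hIp := hIpos μ hμpos
    have hint : Integrable (fun x => w μ x * (F x - f 1)) := by
      have := (hwint μ hμpos).bdd_mul hFc.aestronglyMeasurable
        (c := M) (Filter.Eventually.of_forall fun x => by rw [Real.norm_eq_abs]; exact hFb x)
      have h2 : Integrable (fun x => w μ x * F x) := by simpa [mul_comm] using this
      have h3 : Integrable (fun x => w μ x * f 1) := (hwint μ hμpos).mul_const _
      have := h2.sub h3
      apply this.congr
      filter_upwards with x
      simp only [Pi.sub_apply]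
      ring
    have h1 : J μ - f 1 * I μ = ∫ x : ℝ, w μ x * (F x - f 1) := by
      rw [hJdef, hIdef]
      simp only
      rw [← MeasureTheory.integral_const_mul]
      rw [← MeasureTheory.integral_sub (hJint μ hμpos) ((hwint μ hμpos).const_mul _)]
      congr 1; ext x; ring
    have habs : Integrable (fun x => |w μ x * (F x - f 1)|) := hint.abs
    have h2 : |J μ - f 1 * I μ| ≤ (ε / 4) * I μ + 2 * M * T μ := by
      rw [h1]
      calc |∫ x : ℝ, w μ x * (F x - f 1)|
          ≤ ∫ x : ℝ, |w μ x * (F x - f 1)| := by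
            have := MeasureTheory.norm_integral_le_integral_norm (μ := volume)
              (fun x => w μ x * (F x - f 1))
            simpa only [Real.norm_eq_abs] using this
        _ = (∫ x in s, |w μ x * (F x - f 1)|) + ∫ x in sᶜ, |w μ x * (F x - f 1)| :=
            (MeasureTheory.integral_add_compl hs habs).symm
        _ ≤ (∫ x in s, 2 * M * w μ x) + ∫ x in sᶜ, (ε / 4) * w μ x := by
            apply add_le_add
            · apply MeasureTheory.setIntegral_mono_on habs.integrableOn
                (((hwint μ hμpos).const_mul _).integrableOn) hs
              intro x _
              rw [abs_mul, abs_of_pos (hwpos μ x)]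
              have : |F x - f 1| ≤ 2 * M := by
                have := hFb x
                have h1' : |f 1| ≤ M := hM 1
                calc |F x - f 1| ≤ |F x| + |f 1| := abs_sub _ _
                  _ ≤ 2 * M := by linarith
              nlinarith [(hwpos μ x).le]
            · apply MeasureTheory.setIntegral_mono_on habs.integrableOn
                (((hwint μ hμpos).const_mul _).integrableOn) hs.compl
              intro x hx
              rw [abs_mul, abs_of_pos (hwpos μ x)]
              have hxs : |x| ≤ δ := by
                simp only [hsdef, mem_compl_iff, mem_setOf_eq, not_le] at hx
                exact hx.le
              have := hδ x hxs
              nlinarith [(hwpos μ x).le]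
        _ = 2 * M * T μ + (ε / 4) * ∫ x in sᶜ, w μ x := by
            rw [hTdef, MeasureTheory.integral_const_mul, MeasureTheory.integral_const_mul]
        _ ≤ 2 * M * T μ + (ε / 4) * I μ := by
            apply add_le_add le_rfl
            apply mul_le_mul_of_nonneg_left _ (by positivity)
            exact MeasureTheory.setIntegral_le_integral (hwint μ hμpos)
              (Filter.Eventually.of_forall fun x => (hwpos μ x).le)
        _ = (ε / 4) * I μ + 2 * M * T μ := by ring
    have hTpos : 0 ≤ T μ := by
      rw [hTdef]
      exact MeasureTheory.setIntegral_nonneg hs fun x _ => (hwpos μ x).le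
    have h3 : |(I μ)⁻¹ * J μ - f 1| = (I μ)⁻¹ * |J μ - f 1 * I μ| := by
      have heq3 : (I μ)⁻¹ * J μ - f 1 = (I μ)⁻¹ * (J μ - f 1 * I μ) := by
        have hone : f 1 = (I μ)⁻¹ * (f 1 * I μ) := by
          rw [mul_comm (f 1) (I μ), ← mul_assoc, inv_mul_cancel₀ hIp.ne', one_mul]
        rw [mul_sub, ← hone]
      rw [heq3, abs_mul, abs_of_pos (inv_pos.2 hIp)]
    rw [h3]
    have h4 : (I μ)⁻¹ * |J μ - f 1 * I μ| ≤ (I μ)⁻¹ * ((ε / 4) * I μ + 2 * M * T μ) :=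
      mul_le_mul_of_nonneg_left h2 (inv_pos.2 hIp).le
    have h5 : (I μ)⁻¹ * ((ε / 4) * I μ + 2 * M * T μ) = ε / 4 + 2 * M * (T μ / I μ) := by
      have hc : (I μ)⁻¹ * ((ε / 4) * I μ) = ε / 4 := by
        rw [mul_comm ((ε / 4)) (I μ), ← mul_assoc, inv_mul_cancel₀ hIp.ne', one_mul]
      rw [mul_add, hc, div_eq_mul_inv]
      ring
    have h6 : T μ / I μ ≤ (Real.exp (-(μ - 1) * c1) * I 1) / ((δ / 2) * Real.exp (-μ * c0)) := by
      apply div_le_div₀ (by positivity) (hT μ hμ1) (by positivity) (hIlow μ hμ1)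
    calc (I μ)⁻¹ * |J μ - f 1 * I μ| ≤ ε / 4 + 2 * M * (T μ / I μ) := by
          rw [← h5]; exact h4
      _ ≤ ε / 4 + (2 * M) * ((Real.exp (-(μ - 1) * c1) * I 1) / ((δ / 2) * Real.exp (-μ * c0))) := by
          apply add_le_add le_rfl
          exact mul_le_mul_of_nonneg_left h6 (by positivity)
  -- the bound tends to ε/4
  have hbound : Tendsto (fun μ : ℝ => ε / 4 + (2 * M) *
      ((Real.exp (-(μ - 1) * c1) * I 1) / ((δ / 2) * Real.exp (-μ * c0)))) atTop (nhds (ε / 4)) := by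
    have hrw : ∀ μ : ℝ, (Real.exp (-(μ - 1) * c1) * I 1) / ((δ / 2) * Real.exp (-μ * c0))
        = (I 1 / (δ / 2)) * Real.exp (c1 + μ * (c0 - c1)) := by
      intro μ
      rw [show c1 + μ * (c0 - c1) = (-(μ - 1) * c1) - (-μ * c0) by ring, Real.exp_sub]
      field_simp
    simp_rw [hrw]
    have hlin : Tendsto (fun μ : ℝ => c1 + μ * (c0 - c1)) atTop atBot := by
      apply tendsto_atBot_add_const_left
      exact Tendsto.atTop_mul_const_of_neg (by linarith) tendsto_id
    have hexp : Tendsto (fun μ : ℝ => Real.exp (c1 + μ * (c0 - c1))) atTop (nhds 0) :=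
      Real.tendsto_exp_atBot.comp hlin
    have : Tendsto (fun μ : ℝ => (2 * M) * ((I 1 / (δ / 2)) * Real.exp (c1 + μ * (c0 - c1))))
        atTop (nhds 0) := by
      have := (hexp.const_mul (I 1 / (δ / 2))).const_mul (2 * M)
      simpa using this
    have hfin : Tendsto (fun μ : ℝ => ε / 4 + (2 * M) * ((I 1 / (δ / 2)) * Real.exp (c1 + μ * (c0 - c1))))
        atTop (nhds (ε / 4 + 0)) := Tendsto.add tendsto_const_nhds this
    simpa using hfin
  filter_upwards [eventually_ge_atTop (1:ℝ),
    hbound.eventually_lt_const (show ε / 4 < ε by linarith)] with μ h1 h2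
  rw [Real.dist_eq]
  exact lt_of_le_of_lt (hmain μ h1) h2
end
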